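/- arXiv:1501.06410 — 10 statements merged into one kernel-verified Lean document; each statement's English description precedes it below -/
import Mathlib

section
/- Let ψ : S → T be a surjective semigroup homomorphism and ω a weight on S with ω ≥ ε for some 0 < ε < 1. Let ω→(t) = inf ω(ψ⁻¹(t)) be the pushforward weight. Then for any sequences (xₙ), (yₘ) of elements of T, there exist sequences (sₙ), (tₘ) in S with ψ(sₙ) = xₙ, ψ(tₘ) = yₘ, such that Ω→(xₙ, yₘ) ≤ (1-ε)⁻² · Ω(sₙ, tₘ) for all n, m, where Ω(s,t) = ω(st)/(ω(s)ω(t)) and Ω→(x,y) = ω→(xy)/(ω→(x)ω→(y)). -/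
open Filter Function

def IterLim (F : ℕ → ℕ → ℝ) (L : ℝ) : Prop :=
  ∃ g : ℕ → ℝ, (∀ n, Tendsto (fun m => F n m) atTop (nhds (g n))) ∧
    Tendsto g atTop (nhds L)

def ZeroCluster {S : Type*} (Om : S → S → ℝ) : Prop :=
  ∀ x y : ℕ → S, Injective x → Injective y → ∀ L₁ L₂ : ℝ,
    IterLim (fun n m => Om (x n) (y m)) L₁ →
    IterLim (fun m n => Om (x n) (y m)) L₂ →
    L₁ = 0 ∧ L₂ = 0

def IsWeight {S : Type*} [Mul S] (ω : S → ℝ) : Prop :=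
  (∀ s, 0 < ω s) ∧ ∀ s t, ω (s * t) ≤ ω s * ω t

theorem pushforward_Omega_bound {S T : Type*} [Semigroup S] [Semigroup T]
    (ψ : S →ₙ* T) (hsurj : Surjective ψ) (ω : S → ℝ) (hω : IsWeight ω)
    (ε : ℝ) (hε0 : 0 < ε) (hε1 : ε < 1) (hbdd : ∀ s, ε ≤ ω s)
    (x y : ℕ → T) :
    ∃ s t : ℕ → S, (∀ n, ψ (s n) = x n) ∧ (∀ m, ψ (t m) = y m) ∧
      ∀ n m,
        (fun u v : T => sInf (ω '' {a | ψ a = u * v}) /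
          (sInf (ω '' {a | ψ a = u}) * sInf (ω '' {a | ψ a = v}))) (x n) (y m)
        ≤ (1 - ε)⁻¹ ^ 2 * (ω (s n * t m) / (ω (s n) * ω (t m))) := by
  have h1ε : 0 < 1 - ε := by linarith
  have hbdb : ∀ u : T, BddBelow (ω '' {a | ψ a = u}) := by
    intro u
    exact ⟨ε, fun b ⟨a, _, ha⟩ => ha ▸ hbdd a⟩
  have hne : ∀ u : T, (ω '' {a | ψ a = u}).Nonempty := by
    intro u
    obtain ⟨a, ha⟩ := hsurj u
    exact ⟨ω a, a, ha, rfl⟩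
  have hinf_pos : ∀ u : T, ε ≤ sInf (ω '' {a | ψ a = u}) := by
    intro u
    exact le_csInf (hne u) (fun b ⟨a, _, ha⟩ => ha ▸ hbdd a)
  have hpick : ∀ u : T, ∃ a : S, ψ a = u ∧
      (1 - ε) * ω a ≤ sInf (ω '' {a | ψ a = u}) := by
    intro u
    set I := sInf (ω '' {a | ψ a = u}) with hI
    have hIpos : 0 < I := lt_of_lt_of_le hε0 (hinf_pos u)
    have : I < I / (1 - ε) := by
      rw [lt_div_iff₀ h1ε]
      nlinarith
    obtain ⟨b, ⟨a, ha, hb⟩, hblt⟩ := exists_lt_of_csInf_lt (hne u) this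
    refine ⟨a, ha, ?_⟩
    rw [mul_comm, ← le_div_iff₀ h1ε]
    exact le_of_lt (hb ▸ hblt)
  choose pick hpickψ hpickω using hpick
  refine ⟨pick ∘ x, pick ∘ y, fun n => hpickψ (x n), fun m => hpickψ (y m), ?_⟩
  intro n m
  simp only [comp_apply]
  set s := pick (x n)
  set t := pick (y m)
  have hs : ψ s = x n := hpickψ (x n)
  have ht : ψ t = y m := hpickψ (y m)
  have hωs : 0 < ω s := hω.1 s
  have hωt : 0 < ω t := hω.1 t
  have hC : sInf (ω '' {a | ψ a = x n * y m}) ≤ ω (s * t) := by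
    apply csInf_le (hbdb _)
    exact ⟨s * t, by simp [map_mul, hs, ht], rfl⟩
  have hA : (1 - ε) * ω s ≤ sInf (ω '' {a | ψ a = x n}) := hpickω (x n)
  have hB : (1 - ε) * ω t ≤ sInf (ω '' {a | ψ a = y m}) := hpickω (y m)
  have hdpos : 0 < (1 - ε) * ω s * ((1 - ε) * ω t) := by positivity
  have key : sInf (ω '' {a | ψ a = x n * y m}) /
      (sInf (ω '' {a | ψ a = x n}) * sInf (ω '' {a | ψ a = y m})) ≤
      ω (s * t) / ((1 - ε) * ω s * ((1 - ε) * ω t)) := by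
    apply div_le_div₀ (le_of_lt (hω.1 _)) hC hdpos
    exact mul_le_mul hA hB (by positivity ) (le_trans (le_of_lt hε0) (hinf_pos _))
  refine le_trans key (le_of_eq ?_)
  rw [inv_pow, inv_mul_eq_div, div_div]
  congr 1
  ring
end

section
/- Let F be the free semigroup on generators {a_k : k ≥ 1} with weight ω₁(a_{k₁}⋯a_{k_r}) = 1 + k₁ + ⋯ + k_r, and let Ω₁(x,y) = ω₁(xy)/(ω₁(x)ω₁(y)). Then Ω₁ is 0-cluster: for every pair of sequences (xₙ), (yₘ) of distinct elements of F, whenever both iterated limits limₙ limₘ Ω₁(xₙ,yₘ) and limₘ limₙ Ω₁(xₙ,yₘ) exist, they both equal 0. -/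
open Filter Function

noncomputable def freeWeight (x : FreeSemigroup ℕ+) : ℝ :=
  1 + (((x.head :: x.tail).map (fun k : ℕ+ => (k : ℝ))).sum)

/-- The list of letters of a word. -/
def fwList (x : FreeSemigroup ℕ+) : List ℕ+ := x.head :: x.tail

lemma fwList_injective : Injective fwList := by
  intro x y h
  cases x; cases y
  simpa [fwList] using h

lemma freeWeight_eq (x : FreeSemigroup ℕ+) :
    freeWeight x = 1 + ((fwList x).map (fun k : ℕ+ => (k : ℝ))).sum := rfl

lemma fwList_mul (x y : FreeSemigroup ℕ+) : fwList (x * y) = fwList x ++ fwList y := by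
  simp [fwList, FreeSemigroup.head_mul, FreeSemigroup.tail_mul]

lemma freeWeight_mul (x y : FreeSemigroup ℕ+) :
    freeWeight (x * y) = freeWeight x + freeWeight y - 1 := by
  simp [freeWeight_eq, fwList_mul]
  ring

lemma sum_le_of_mem {l : List ℕ+} {k : ℕ+} (hk : k ∈ l) :
    (k : ℝ) ≤ (l.map (fun k : ℕ+ => (k : ℝ))).sum := by
  apply List.single_le_sum (fun r hr => ?_) _ (List.mem_map_of_mem hk)
  rcases List.mem_map.1 hr with ⟨j, -, rfl⟩
  positivity

lemma length_le_sum (l : List ℕ+) :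
    (l.length : ℝ) ≤ (l.map (fun k : ℕ+ => (k : ℝ))).sum := by
  induction l with
  | nil => simp
  | cons a t ih =>
    simp only [List.map_cons, List.sum_cons, List.length_cons]
    push_cast
    have : (1 : ℝ) ≤ (a : ℝ) := by exact_mod_cast a.one_le
    linarith

lemma sum_nonneg' (l : List ℕ+) : 0 ≤ (l.map (fun k : ℕ+ => (k : ℝ))).sum := by
  apply List.sum_nonneg
  intro r hr
  rcases List.mem_map.1 hr with ⟨j, -, rfl⟩
  positivity

lemma two_le_freeWeight (x : FreeSemigroup ℕ+) : 2 ≤ freeWeight x := by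
  rw [freeWeight_eq]
  have h1 : ((fwList x).length : ℝ) ≤ ((fwList x).map (fun k : ℕ+ => (k : ℝ))).sum :=
    length_le_sum _
  have h2 : 1 ≤ (fwList x).length := by simp [fwList]
  have : (1 : ℝ) ≤ ((fwList x).length : ℝ) := by exact_mod_cast h2
  linarith

lemma freeWeight_pos (x : FreeSemigroup ℕ+) : 0 < freeWeight x := by
  linarith [two_le_freeWeight x]

lemma finite_sublevel (C : ℝ) : {z : FreeSemigroup ℕ+ | freeWeight z < C}.Finite := by
  set N := ⌈C⌉₊ with hN
  have hCN : C ≤ (N : ℝ) := Nat.le_ceil C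
  set f : FreeSemigroup ℕ+ → List (Fin (N + 1)) := fun z =>
    (fwList z).map (fun k : ℕ+ => (⟨min (k : ℕ) N, Nat.lt_succ_of_le (min_le_right _ _)⟩ :
      Fin (N + 1)))
  -- entries of a sublevel word are ≤ N
  have hent : ∀ z ∈ {z : FreeSemigroup ℕ+ | freeWeight z < C}, ∀ k ∈ fwList z, (k : ℕ) ≤ N := by
    intro z hz k hk
    have h1 : (k : ℝ) ≤ ((fwList z).map (fun k : ℕ+ => (k : ℝ))).sum := sum_le_of_mem hk
    have h2 : freeWeight z < C := hz
    rw [freeWeight_eq] at h2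
    have : ((k : ℕ) : ℝ) < (N : ℝ) := by
      linarith
    exact le_of_lt (by exact_mod_cast this)
  apply Set.Finite.of_finite_image (f := f)
  · apply (List.finite_length_le (Fin (N + 1)) N).subset
    rintro l ⟨z, hz, rfl⟩
    have h2 : freeWeight z < C := hz
    rw [freeWeight_eq] at h2
    have h1 : ((fwList z).length : ℝ) ≤ ((fwList z).map (fun k : ℕ+ => (k : ℝ))).sum :=
      length_le_sum _
    have hl : ((fwList z).length : ℝ) < (N : ℝ) := by linarith
    have : (fwList z).length < N := by exact_mod_cast hl
    simpa [f] using this.le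
  · intro z hz w hw hfw
    have hmap : (fwList z).map (fun k : ℕ+ => (k : ℕ)) =
        (fwList w).map (fun k : ℕ+ => (k : ℕ)) := by
      have h := congrArg (List.map (Fin.val)) hfw
      simp only [f, List.map_map] at h
      have hz' : (fwList z).map (Fin.val ∘ fun k : ℕ+ =>
          (⟨min (k : ℕ) N, Nat.lt_succ_of_le (min_le_right _ _)⟩ : Fin (N + 1))) =
          (fwList z).map (fun k : ℕ+ => (k : ℕ)) :=
        List.map_congr_left (fun k hk => by simp [comp, min_eq_left (hent z hz k hk)])
      have hw' : (fwList w).map (Fin.val ∘ fun k : ℕ+ =>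
          (⟨min (k : ℕ) N, Nat.lt_succ_of_le (min_le_right _ _)⟩ : Fin (N + 1))) =
          (fwList w).map (fun k : ℕ+ => (k : ℕ)) :=
        List.map_congr_left (fun k hk => by simp [comp, min_eq_left (hent w hw k hk)])
      rw [hz', hw'] at h
      exact h
    have : fwList z = fwList w :=
      List.map_injective_iff.2 (fun a b h => by exact_mod_cast h) hmap
    exact fwList_injective this

lemma tendsto_freeWeight_cofinite : Tendsto freeWeight cofinite atTop := by
  rw [tendsto_atTop]
  intro b
  rw [eventually_cofinite]
  apply (finite_sublevel b).subset
  intro z hz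
  simpa using lt_of_not_ge hz

lemma tendsto_fw_comp {x : ℕ → FreeSemigroup ℕ+} (hx : Injective x) :
    Tendsto (fun n => freeWeight (x n)) atTop atTop := by
  have h1 : Tendsto x cofinite cofinite := hx.tendsto_cofinite
  rw [← Nat.cofinite_eq_atTop]
  exact tendsto_freeWeight_cofinite.comp h1

/-- The inner limit: for fixed `a ≥ 2`, `(a + b - 1)/(a*b) → a⁻¹` as `b → ∞`. -/
lemma inner_limit {a : ℝ} (ha : 2 ≤ a) :
    Tendsto (fun b : ℝ => (a + b - 1) / (a * b)) atTop (nhds a⁻¹) := by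
  have ha0 : a ≠ 0 := by linarith
  have h : Tendsto (fun b : ℝ => (a - 1) / a * b⁻¹ + a⁻¹) atTop (nhds a⁻¹) := by
    have := (tendsto_inv_atTop_zero.const_mul ((a - 1) / a)).add
      (tendsto_const_nhds (x := a⁻¹) (f := atTop))
    simpa using this
  apply h.congr'
  filter_upwards [eventually_gt_atTop (0 : ℝ)] with b hb
  have hb0 : b ≠ 0 := ne_of_gt hb
  field_simp
  ring

theorem freeWeight_zeroCluster :
    ZeroCluster (fun x y : FreeSemigroup ℕ+ =>
      freeWeight (x * y) / (freeWeight x * freeWeight y)) := by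
  intro x y hx hy L₁ L₂ ⟨g₁, hg₁, hL₁⟩ ⟨g₂, hg₂, hL₂⟩
  have key : ∀ (z : FreeSemigroup ℕ+) (w : ℕ → FreeSemigroup ℕ+), Injective w →
      Tendsto (fun m => freeWeight (z * w m) / (freeWeight z * freeWeight (w m))) atTop
        (nhds (freeWeight z)⁻¹) := by
    intro z w hw
    have h1 : Tendsto (fun b : ℝ => (freeWeight z + b - 1) / (freeWeight z * b)) atTop
        (nhds (freeWeight z)⁻¹) := inner_limit (two_le_freeWeight z)
    have h2 := h1.comp (tendsto_fw_comp hw)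
    apply h2.congr
    intro m
    simp [comp, freeWeight_mul]
  have key' : ∀ (z : FreeSemigroup ℕ+) (w : ℕ → FreeSemigroup ℕ+), Injective w →
      Tendsto (fun m => freeWeight (w m * z) / (freeWeight (w m) * freeWeight z)) atTop
        (nhds (freeWeight z)⁻¹) := by
    intro z w hw
    apply (key z w hw).congr
    intro m
    rw [freeWeight_mul, freeWeight_mul]
    ring_nf
  have hg₁' : g₁ = fun n => (freeWeight (x n))⁻¹ := by
    funext n
    exact tendsto_nhds_unique (hg₁ n) (key (x n) y hy)
  have hg₂' : g₂ = fun m => (freeWeight (y m))⁻¹ := by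
    funext m
    exact tendsto_nhds_unique (hg₂ m) (key' (y m) x hx)
  have hzero : ∀ (w : ℕ → FreeSemigroup ℕ+), Injective w →
      Tendsto (fun n => (freeWeight (w n))⁻¹) atTop (nhds 0) :=
    fun w hw => (tendsto_fw_comp hw).inv_tendsto_atTop
  constructor
  · exact tendsto_nhds_unique hL₁ (hg₁' ▸ hzero x hx)
  · exact tendsto_nhds_unique hL₂ (hg₂' ▸ hzero y hy)
end

section
/- A nonempty set X is countable if and only if there exists a function f : X → (0,∞) such that for every injective sequence (xₙ) of elements of X, the sequence (f(xₙ)) is unbounded. -/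
open Filter Function

theorem countable_iff_unbounded_function {X : Type*} (hX : Nonempty X) :
    Countable X ↔ ∃ f : X → ℝ, (∀ x, 0 < f x) ∧
      ∀ x : ℕ → X, Injective x → ¬ BddAbove (Set.range (fun n => f (x n))) := by
  constructor
  · intro hC
    obtain ⟨g, hg⟩ := (Countable.exists_injective_nat X)
    refine ⟨fun x => (g x : ℝ) + 1, fun x => by positivity, ?_⟩
    intro x hx hbdd
    obtain ⟨c, hc⟩ := hbdd
    have hinj : Injective (fun n => g (x n)) := hg.comp hx
    have hbd : ∀ n, g (x n) ≤ ⌈c⌉₊ := by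
      intro n
      have := hc (Set.mem_range_self n)
      have h1 : (g (x n) : ℝ) ≤ c := by simp only [] at this; linarith
      exact_mod_cast h1.trans (Nat.le_ceil c)
    -- injective map ℕ → Set.Iic ⌈c⌉₊, finite, contradiction
    have : Injective (fun n => (⟨g (x n), hbd n⟩ : Set.Iic (⌈c⌉₊))) := by
      intro a b hab
      exact hinj (by simpa using congrArg Subtype.val hab)
    obtain ⟨a, b, hab, heq⟩ := Finite.exists_ne_map_eq_of_infinite
      (fun n => (⟨g (x n), hbd n⟩ : Set.Iic (⌈c⌉₊)))
    exact hab (this heq)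
  · rintro ⟨f, hpos, hf⟩
    have hfin : ∀ n : ℕ, {x : X | f x ≤ n}.Finite := by
      intro n
      by_contra h
      have hinf : {x : X | f x ≤ n}.Infinite := h
      set e := hinf.natEmbedding
      have hinj : Injective (fun k => (e k : X)) :=
        Subtype.val_injective.comp e.injective
      apply hf _ hinj
      refine ⟨n, ?_⟩
      rintro y ⟨k, rfl⟩
      exact (e k).2
    have huniv : (Set.univ : Set X) ⊆ ⋃ n : ℕ, {x : X | f x ≤ n} := by
      intro x _
      exact Set.mem_iUnion.2 ⟨⌈f x⌉₊, Nat.le_ceil (f x)⟩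
    have hcount : (Set.univ : Set X).Countable :=
      ((Set.countable_iUnion (fun n => (hfin n).countable)).mono huniv)
    exact Set.countable_univ_iff.mp hcount
end

section
/- Let S = M⁰(G, I, Λ; P) be a Rees matrix semigroup with zero over a group G, and suppose ω is a weight on S bounded below by ε > 0 such that Ω(s,t) = ω(st)/(ω(s)ω(t)) is 0-cluster. Then the index set I is countable. -/
open Filter Function

def reesMul {G I Λ : Type*} [Group G] (P : Λ → I → Option G) :
    Option (I × G × Λ) → Option (I × G × Λ) → Option (I × G × Λ)
  | some (i, a, l), some (j, b, m) => (P l j).map (fun p => (i, a * p * b, m))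
  | _, _ => none

theorem rees_index_countable {G I Λ : Type*} [Group G] [Nonempty Λ]
    (P : Λ → I → Option G) (ω : Option (I × G × Λ) → ℝ)
    (hpos : ∀ s, 0 < ω s)
    (hsub : ∀ s t, ω (reesMul P s t) ≤ ω s * ω t)
    (ε : ℝ) (hε : 0 < ε) (hbdd : ∀ s, ε ≤ ω s)
    (hcl : ZeroCluster (fun s t => ω (reesMul P s t) / (ω s * ω t))) :
    Countable I := by
  classical
  by_contra hI
  obtain ⟨l₀⟩ := (inferInstance : Nonempty Λ)
  set f1 : I → ℝ := fun i => ω (some (i, 1, l₀)) with hf1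
  set f2 : I → ℝ := fun i => ω (some (i, (((P l₀ i).getD 1)⁻¹ : G), l₀)) with hf2
  set g : I → ℕ := fun i => ⌈max (f1 i) (f2 i)⌉₊ with hg
  -- pigeonhole: some fiber of g is uncountable, hence infinite
  have hfib : ∃ n, ¬ (g ⁻¹' {n}).Countable := by
    by_contra h
    push_neg at h
    have huniv : (Set.univ : Set I).Countable := by
      have he : (Set.univ : Set I) = ⋃ n, g ⁻¹' {n} := by
        ext i; simp
      rw [he]
      exact Set.countable_iUnion h
    exact hI (Set.countable_univ_iff.mp huniv)
  obtain ⟨N, hN⟩ := hfib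
  have hinf : (g ⁻¹' {N}).Infinite := fun hfin => hN hfin.countable
  let e := hinf.natEmbedding
  set u : ℕ → I := fun n => (e n : I) with hu
  have hu_inj : Injective u := fun a b hab => e.injective (Subtype.ext hab)
  have hu_mem : ∀ n, g (u n) = N := fun n => (e n).2
  have hmax : ∀ n, max (f1 (u n)) (f2 (u n)) ≤ (N : ℝ) := by
    intro n
    calc max (f1 (u n)) (f2 (u n)) ≤ (⌈max (f1 (u n)) (f2 (u n))⌉₊ : ℝ) := Nat.le_ceil _
      _ = (N : ℝ) := by exact_mod_cast congrArg Nat.cast (hu_mem n)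
  have hb1 : ∀ n, f1 (u n) ≤ (N : ℝ) := fun n => le_trans (le_max_left _ _) (hmax n)
  have hb2 : ∀ n, f2 (u n) ≤ (N : ℝ) := fun n => le_trans (le_max_right _ _) (hmax n)
  have hbdI : Bornology.IsBounded (Set.Icc (ε : ℝ) (N : ℝ)) := Metric.isBounded_Icc _ _
  by_cases hA : {n : ℕ | P l₀ (u n) = none}.Infinite
  · -- the "none" case
    let e2 := hA.natEmbedding
    set v : ℕ → I := fun n => u (e2 n) with hv
    have hv_inj : Injective v := fun a b hab => e2.injective (Subtype.ext (hu_inj hab))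
    have hvnone : ∀ n, P l₀ (v n) = none := fun n => (e2 n).2
    set a : ℕ → ℝ := fun n => ω (some (v n, 1, l₀)) with ha
    have hamem : ∀ n, a n ∈ Set.Icc (ε : ℝ) (N : ℝ) := fun n =>
      ⟨hbdd _, hb1 (e2 n)⟩
    obtain ⟨A, hAcl, φ, hφ, hconv⟩ := tendsto_subseq_of_bounded hbdI hamem
    have hAmem : A ∈ Set.Icc (ε : ℝ) (N : ℝ) := by
      rwa [isClosed_Icc.closure_eq] at hAcl
    have hApos : 0 < A := lt_of_lt_of_le hε hAmem.1
    set xx : ℕ → Option (I × G × Λ) := fun n => some (v (φ n), 1, l₀) with hxx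
    have hxx_inj : Injective xx := by
      intro n m h
      simp only [hxx, Option.some.injEq, Prod.mk.injEq] at h
      exact hφ.injective (hv_inj h.1)
    have hmul : ∀ n m, reesMul P (xx n) (xx m) = none := by
      intro n m
      simp [hxx, reesMul, hvnone (φ m)]
    set c : ℝ := ω none with hc
    have hωxx : ∀ n, ω (xx n) = a (φ n) := fun n => rfl
    have hconv' : Tendsto (fun m => a (φ m)) atTop (nhds A) := hconv
    set L : ℝ := c / (A * A) with hL
    have h1 : IterLim (fun n m => ω (reesMul P (xx n) (xx m)) / (ω (xx n) * ω (xx m))) L := by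
      refine ⟨fun n => c / (a (φ n) * A), fun n => ?_, ?_⟩
      · simp only [hmul, hωxx]
        exact tendsto_const_nhds.div (tendsto_const_nhds.mul hconv')
          (mul_ne_zero (ne_of_gt (hpos _)) (ne_of_gt hApos))
      · exact tendsto_const_nhds.div (hconv'.mul tendsto_const_nhds)
          (mul_ne_zero (ne_of_gt hApos) (ne_of_gt hApos))
    have h2 : IterLim (fun m n => ω (reesMul P (xx n) (xx m)) / (ω (xx n) * ω (xx m))) L := by
      refine ⟨fun m => c / (A * a (φ m)), fun m => ?_, ?_⟩
      · simp only [hmul, hωxx]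
        exact tendsto_const_nhds.div (hconv'.mul tendsto_const_nhds)
          (mul_ne_zero (ne_of_gt hApos) (ne_of_gt (hpos _)))
      · exact tendsto_const_nhds.div (tendsto_const_nhds.mul hconv')
          (mul_ne_zero (ne_of_gt hApos) (ne_of_gt hApos))
    have := (hcl xx xx hxx_inj hxx_inj L L h1 h2).1
    have hLpos : 0 < L := div_pos (hpos none) (mul_pos hApos hApos)
    exact absurd this (ne_of_gt hLpos)
  · -- the "some" case
    have hB : {n : ℕ | P l₀ (u n) = none}ᶜ.Infinite :=
      (Set.not_infinite.mp hA).infinite_compl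
    let e3 := hB.natEmbedding
    set v : ℕ → I := fun n => u (e3 n) with hv
    have hv_inj : Injective v := fun a b hab => e3.injective (Subtype.ext (hu_inj hab))
    have hvsome : ∀ n, P l₀ (v n) = some ((P l₀ (v n)).getD 1) := by
      intro n
      have h := (e3 n).2
      simp only [Set.mem_compl_iff, Set.mem_setOf_eq] at h
      cases hP : P l₀ (v n) with
      | none => exact absurd hP h
      | some p => simp [hP]
    set q : ℕ → G := fun n => (P l₀ (v n)).getD 1 with hq
    set b : ℕ → ℝ := fun n => ω (some (v n, (q n)⁻¹, l₀)) with hb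
    have hbmem : ∀ n, b n ∈ Set.Icc (ε : ℝ) (N : ℝ) := fun n =>
      ⟨hbdd _, hb2 (e3 n)⟩
    obtain ⟨B, hBcl, ψ, hψ, hconv⟩ := tendsto_subseq_of_bounded hbdI hbmem
    have hBmem : B ∈ Set.Icc (ε : ℝ) (N : ℝ) := by
      rwa [isClosed_Icc.closure_eq] at hBcl
    have hBpos : 0 < B := lt_of_lt_of_le hε hBmem.1
    set xx : ℕ → Option (I × G × Λ) := fun n => some (v (ψ n), 1, l₀) with hxx
    set yy : ℕ → Option (I × G × Λ) := fun n => some (v (ψ n), (q (ψ n))⁻¹, l₀) with hyy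
    have hxx_inj : Injective xx := by
      intro n m h
      simp only [hxx, Option.some.injEq, Prod.mk.injEq] at h
      exact hψ.injective (hv_inj h.1)
    have hyy_inj : Injective yy := by
      intro n m h
      simp only [hyy, Option.some.injEq, Prod.mk.injEq] at h
      exact hψ.injective (hv_inj h.1)
    have hmul : ∀ n m, reesMul P (xx n) (yy m) = some (v (ψ n), 1, l₀) := by
      intro n m
      show (P l₀ (v (ψ m))).map (fun p => (v (ψ n), 1 * p * (q (ψ m))⁻¹, l₀))
          = some (v (ψ n), 1, l₀)
      rw [hvsome (ψ m)]
      simp [hq]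
    have hOm : ∀ n m,
        ω (reesMul P (xx n) (yy m)) / (ω (xx n) * ω (yy m)) = (b (ψ m))⁻¹ := by
      intro n m
      rw [hmul n m]
      have hx : ω (xx n) = ω (some (v (ψ n), 1, l₀)) := rfl
      rw [div_mul_eq_div_div, div_self (ne_of_gt (hpos _)), one_div]
    set L : ℝ := B⁻¹ with hL
    have hbconv : Tendsto (fun m => (b (ψ m))⁻¹) atTop (nhds B⁻¹) :=
      (hconv : Tendsto (fun m => b (ψ m)) atTop (nhds B)).inv₀ (ne_of_gt hBpos)
    have h1 : IterLim (fun n m => ω (reesMul P (xx n) (yy m)) / (ω (xx n) * ω (yy m))) L := by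
      refine ⟨fun _ => B⁻¹, fun n => ?_, tendsto_const_nhds⟩
      simp only [hOm]
      exact hbconv
    have h2 : IterLim (fun m n => ω (reesMul P (xx n) (yy m)) / (ω (xx n) * ω (yy m))) L := by
      refine ⟨fun m => (b (ψ m))⁻¹, fun m => ?_, hbconv⟩
      simp only [hOm]
      exact tendsto_const_nhds
    have := (hcl xx yy hxx_inj hyy_inj L L h1 h2).1
    exact absurd this (ne_of_gt (inv_pos.mpr hBpos))
end

section
/- Let S = M⁰(G, I, Λ; P) be a Rees matrix semigroup with zero over a group G, and suppose ω is a weight on S bounded below such that Ω is 0-cluster. Fix i₀ ∈ I and λ₀ ∈ Λ with p_{λ₀ i₀} ≠ 0, and define ω₀ : G → (0,∞) by ω₀(g) = ω(i₀, g·p_{λ₀ i₀}⁻¹, λ₀). Then ω₀ is a weight on G and Ω₀(g,h) = ω₀(gh)/(ω₀(g)ω₀(h)) is 0-cluster on G. -/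
open Filter Function

theorem rees_group_weight {G I Λ : Type*} [Group G]
    (P : Λ → I → Option G) (ω : Option (I × G × Λ) → ℝ)
    (hpos : ∀ s, 0 < ω s)
    (hsub : ∀ s t, ω (reesMul P s t) ≤ ω s * ω t)
    (ε : ℝ) (hε : 0 < ε) (hbdd : ∀ s, ε ≤ ω s)
    (hcl : ZeroCluster (fun s t => ω (reesMul P s t) / (ω s * ω t)))
    (i₀ : I) (l₀ : Λ) (p : G) (hp : P l₀ i₀ = some p) :
    IsWeight (fun g : G => ω (some (i₀, g * p⁻¹, l₀))) ∧
    ZeroCluster (fun g h : G =>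
      ω (some (i₀, (g * h) * p⁻¹, l₀)) /
        (ω (some (i₀, g * p⁻¹, l₀)) * ω (some (i₀, h * p⁻¹, l₀)))) := by
  have key : ∀ g h : G, reesMul P (some (i₀, g * p⁻¹, l₀)) (some (i₀, h * p⁻¹, l₀))
      = some (i₀, (g * h) * p⁻¹, l₀) := by
    intro g h
    simp only [reesMul, hp, Option.map_some]
    congr 1
    ext <;> simp <;> group
  constructor
  · refine ⟨fun g => hpos _, fun g h => ?_⟩
    have := hsub (some (i₀, g * p⁻¹, l₀)) (some (i₀, h * p⁻¹, l₀))
    rwa [key] at this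
  · intro x y hx hy L₁ L₂ h1 h2
    have hx' : Injective (fun n => (some (i₀, x n * p⁻¹, l₀) : Option (I × G × Λ))) := by
      intro a b hab
      simp only [Option.some.injEq, Prod.mk.injEq, mul_left_inj] at hab
      exact hx hab.2.1
    have hy' : Injective (fun n => (some (i₀, y n * p⁻¹, l₀) : Option (I × G × Λ))) := by
      intro a b hab
      simp only [Option.some.injEq, Prod.mk.injEq, mul_left_inj] at hab
      exact hy hab.2.1
    have := hcl _ _ hx' hy' L₁ L₂
    simp only [key] at this
    exact this h1 h2
end

section
/- Every uncountable group G admits no weight ω bounded below for which Ω(g,h) = ω(gh)/(ω(g)ω(h)) is 0-cluster. Equivalently: if a group G admits a bounded below weight ω such that Ω is 0-cluster, then G is countable. -/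
open Filter Function

/-- Subsequence extraction in the compact product `[c,d]^ℕ`. -/
lemma exists_subseq_tendsto_pi (c d : ℝ) (x : ℕ → ℕ → ℝ)
    (hx : ∀ n i, x n i ∈ Set.Icc c d) :
    ∃ r : ℕ → ℝ, (∀ i, r i ∈ Set.Icc c d) ∧ ∃ φ : ℕ → ℕ, StrictMono φ ∧
      ∀ i, Tendsto (fun n => x (φ n) i) atTop (nhds (r i)) := by
  have hK : IsCompact (Set.pi Set.univ fun _ : ℕ => Set.Icc c d) :=
    isCompact_univ_pi fun _ => isCompact_Icc
  obtain ⟨r, hr, φ, hφ, hlim⟩ := hK.tendsto_subseq (x := x)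
    (fun n i _ => hx n i)
  rw [tendsto_pi_nhds] at hlim
  exact ⟨r, fun i => hr i (Set.mem_univ i), φ, hφ, hlim⟩

/-- Double-sequence diagonal extraction: both iterated limits exist along
subsequences, with limits staying in `[c,d]`. -/
lemma diag_extract (F : ℕ → ℕ → ℝ) (c d : ℝ) (h : ∀ n m, F n m ∈ Set.Icc c d) :
    ∃ φ ψ : ℕ → ℕ, StrictMono φ ∧ StrictMono ψ ∧
      ∃ L₁ ∈ Set.Icc c d, ∃ L₂ ∈ Set.Icc c d,
        IterLim (fun n m => F (φ n) (ψ m)) L₁ ∧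
        IterLim (fun m n => F (φ n) (ψ m)) L₂ := by
  obtain ⟨r, hr, φ₀, hφ₀, hrow⟩ := exists_subseq_tendsto_pi c d F h
  obtain ⟨dd, hdd, ψ₀, hψ₀, hcol⟩ :=
    exists_subseq_tendsto_pi c d (fun m n => F (φ₀ n) m) (fun m n => h _ _)
  obtain ⟨L₁, hL₁, σ, hσ, hdconv⟩ :=
    (isCompact_Icc (a := c) (b := d)).tendsto_subseq (x := dd) hdd
  obtain ⟨L₂, hL₂, τ, hτ, hrconv⟩ :=
    (isCompact_Icc (a := c) (b := d)).tendsto_subseq (x := fun m => r (ψ₀ m))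
      (fun m => hr _)
  refine ⟨φ₀ ∘ σ, ψ₀ ∘ τ, hφ₀.comp hσ, hψ₀.comp hτ, L₁, hL₁, L₂, hL₂, ?_, ?_⟩
  · exact ⟨fun n => dd (σ n),
      fun n => (hcol (σ n)).comp hτ.tendsto_atTop, hdconv⟩
  · exact ⟨fun m => r (ψ₀ (τ m)),
      fun m => (hrow (ψ₀ (τ m))).comp hσ.tendsto_atTop, hrconv⟩

theorem group_zeroCluster_countable {G : Type*} [Group G]
    (ω : G → ℝ) (hω : IsWeight ω) (ε : ℝ) (hε : 0 < ε) (hbdd : ∀ g, ε ≤ ω g)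
    (hcl : ZeroCluster (fun g h : G => ω (g * h) / (ω g * ω h))) :
    Countable G := by
  obtain ⟨hpos, hsub⟩ := hω
  by_contra hG
  -- find k with an uncountable (hence infinite) set of g with ω g, ω g⁻¹ ≤ k
  have hkex : ∃ k : ℕ, ¬ (Set.Countable {g : G | ω g ≤ k ∧ ω g⁻¹ ≤ k}) := by
    by_contra hall
    push_neg at hall
    have hcu : Set.Countable (⋃ k : ℕ, {g : G | ω g ≤ k ∧ ω g⁻¹ ≤ k}) :=
      Set.countable_iUnion hall
    have huniv : (⋃ k : ℕ, {g : G | ω g ≤ k ∧ ω g⁻¹ ≤ k}) = Set.univ := by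
      ext g
      simp only [Set.mem_iUnion, Set.mem_setOf_eq, Set.mem_univ, iff_true]
      obtain ⟨k, hk⟩ := exists_nat_ge (max (ω g) (ω g⁻¹))
      exact ⟨k, le_trans (le_max_left _ _) hk, le_trans (le_max_right _ _) hk⟩
    rw [huniv] at hcu
    exact hG (Set.countable_univ_iff.mp hcu)
  obtain ⟨k, hk⟩ := hkex
  have hinf : {g : G | ω g ≤ k ∧ ω g⁻¹ ≤ k}.Infinite := by
    intro hfin; exact hk hfin.countable
  set A := {g : G | ω g ≤ k ∧ ω g⁻¹ ≤ k}
  let e := hinf.natEmbedding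
  let x : ℕ → G := fun n => (e n : G)
  have hxA : ∀ n, x n ∈ A := fun n => (e n).2
  have hxinj : Injective x :=
    Subtype.coe_injective.comp e.injective
  -- k is positive since A is nonempty
  have hεk : ε ≤ (k : ℝ) := le_trans (hbdd (x 0)) (hxA 0).1
  have hk0 : (0 : ℝ) < k := lt_of_lt_of_le hε hεk
  -- the double sequence
  set F : ℕ → ℕ → ℝ :=
    fun n m => ω (x n * (x m)⁻¹) / (ω (x n) * ω ((x m)⁻¹)) with hF
  have hden : ∀ n m, 0 < ω (x n) * ω ((x m)⁻¹) :=
    fun n m => mul_pos (hpos _) (hpos _)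
  have hFbound : ∀ n m, F n m ∈ Set.Icc (ε / (k * k)) 1 := by
    intro n m
    constructor
    · rw [div_le_div_iff₀ (by positivity) (hden n m)]
      calc ε * (ω (x n) * ω ((x m)⁻¹)) ≤ ω (x n * (x m)⁻¹) * ((k : ℝ) * k) := by
            apply mul_le_mul (hbdd _) _ (le_of_lt (hden n m)) (le_of_lt (hpos _))
            exact mul_le_mul (hxA n).1 (hxA m).2 (le_of_lt (hpos _)) (le_of_lt hk0)
        _ = ω (x n * (x m)⁻¹) * (k * k) := rfl
    · rw [div_le_one (hden n m)]
      exact hsub _ _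
  obtain ⟨φ, ψ, hφ, hψ, L₁, hL₁, L₂, hL₂, hI₁, hI₂⟩ :=
    diag_extract F (ε / (k * k)) 1 hFbound
  have hzero := hcl (fun n => x (φ n)) (fun m => (x (ψ m))⁻¹)
    (hxinj.comp hφ.injective)
    ((inv_injective.comp hxinj).comp hψ.injective) L₁ L₂ hI₁ hI₂
  have : (0 : ℝ) < ε / (k * k) := by positivity
  rw [hzero.1] at hL₁
  exact absurd hL₁.1 (not_le.mpr this)
end

section
/- If S is an uncountable weakly cancellative semigroup, then S admits no bounded below weight ω for which Ω(s,t) = ω(st)/(ω(s)ω(t)) is 0-cluster. -/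
open Filter Function

theorem weakly_cancellative_uncountable {S : Type*} [Semigroup S]
    (hwc : ∀ s t : S, {x : S | s * x = t}.Finite ∧ {x : S | x * s = t}.Finite)
    (hunc : ¬ Countable S) :
    ¬ ∃ (ω : S → ℝ) (ε : ℝ), IsWeight ω ∧ 0 < ε ∧ (∀ s, ε ≤ ω s) ∧
      ZeroCluster (fun s t : S => ω (s * t) / (ω s * ω t)) := by
  rintro ⟨ω, ε, ⟨hpos, hsub⟩, hε, hlb, hzc⟩
  -- Step 1: find N with {s | ω s ≤ N} infinite
  have hS : ∃ N : ℕ, ¬ ({s : S | ω s ≤ (N : ℝ)}).Countable := by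
    by_contra h
    push_neg at h
    apply hunc
    have hsub' : (Set.univ : Set S) ⊆ ⋃ N : ℕ, {s : S | ω s ≤ (N : ℝ)} := by
      intro s _
      exact Set.mem_iUnion.2 ⟨⌈ω s⌉₊, by simpa using Nat.le_ceil (ω s)⟩
    have : (Set.univ : Set S).Countable :=
      ((Set.countable_iUnion h).mono hsub')
    exact Set.countable_univ_iff.mp this
  obtain ⟨N, hN⟩ := hS
  have hinf : {s : S | ω s ≤ (N : ℝ)}.Infinite := by
    by_contra hfin
    exact hN ((Set.not_infinite.mp hfin).countable)
  let e : ℕ → S := fun n => ((Set.Infinite.natEmbedding _ hinf) n : S)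
  have he : Injective e := Subtype.coe_injective.comp (Set.Infinite.natEmbedding _ hinf).injective
  have heN : ∀ n, ω (e n) ≤ (N : ℝ) := fun n => ((Set.Infinite.natEmbedding _ hinf) n).2
  have hNpos : (0 : ℝ) < N := lt_of_lt_of_le hε (le_trans (hlb (e 0)) (heN 0))
  set δ : ℝ := ε / ((N : ℝ) * N) with hδdef
  have hδpos : 0 < δ := div_pos hε (mul_pos hNpos hNpos)
  set a : ℕ → ℕ → ℝ := fun n m => ω (e n * e m) / (ω (e n) * ω (e m)) with hadef
  have ha : ∀ n m, a n m ∈ Set.Icc δ 1 := by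
    intro n m
    have hden : 0 < ω (e n) * ω (e m) := mul_pos (hpos _) (hpos _)
    constructor
    · rw [hδdef, div_le_div_iff₀ (mul_pos hNpos hNpos) hden]
      have h1 := hlb (e n * e m)
      have h2 := heN n
      have h3 := heN m
      have h4 := hpos (e n)
      have h5 := hpos (e m)
      calc ε * (ω (e n) * ω (e m)) ≤ ε * ((N : ℝ) * N) :=
              mul_le_mul_of_nonneg_left (mul_le_mul h2 h3 h5.le hNpos.le) hε.le
        _ ≤ ω (e n * e m) * ((N : ℝ) * N) :=
              mul_le_mul_of_nonneg_right h1 (mul_pos hNpos hNpos).le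
    · exact div_le_one_of_le₀ (hsub _ _) hden.le
  -- compact sets
  have hKc : IsCompact (Set.pi Set.univ fun _ : ℕ => Set.Icc δ 1) :=
    isCompact_univ_pi fun _ => isCompact_Icc
  have hIc : IsCompact (Set.Icc δ 1) := isCompact_Icc
  -- Step A: extract φ so that columns converge pointwise to f
  obtain ⟨f, hfK, φ, hφ, hφlim⟩ :=
    hKc.tendsto_subseq (x := fun n => a n) (fun n => by
      intro m _; exact ha n m)
  rw [tendsto_pi_nhds] at hφlim
  have hfmem : ∀ m, f m ∈ Set.Icc δ 1 := fun m => hfK m (Set.mem_univ m)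
  -- Step B: extract ψ so that rows (of the φ-subsequence) converge pointwise to g
  obtain ⟨g, hgK, ψ, hψ, hψlim⟩ :=
    hKc.tendsto_subseq (x := fun m => fun k => a (φ k) m) (fun m => by
      intro k _; exact ha (φ k) m)
  rw [tendsto_pi_nhds] at hψlim
  have hgmem : ∀ k, g k ∈ Set.Icc δ 1 := fun k => hgK k (Set.mem_univ k)
  -- Step C: extract σ so that g ∘ σ converges to L₁
  obtain ⟨L₁, hL₁, σ, hσ, hσlim⟩ := hIc.tendsto_subseq (x := g) hgmem
  -- Step D: extract ρ so that f ∘ ψ ∘ ρ converges to L₂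
  obtain ⟨L₂, hL₂, ρ, hρ, hρlim⟩ :=
    hIc.tendsto_subseq (x := fun j => f (ψ j)) (fun j => hfmem (ψ j))
  -- assemble
  set x : ℕ → S := fun n => e (φ (σ n)) with hxdef
  set y : ℕ → S := fun m => e (ψ (ρ m)) with hydef
  have hxinj : Injective x := he.comp ((hφ.comp hσ).injective)
  have hyinj : Injective y := he.comp ((hψ.comp hρ).injective)
  have hIter1 : IterLim (fun n m => a (φ (σ n)) (ψ (ρ m))) L₁ := by
    refine ⟨fun n => g (σ n), fun n => ?_, hσlim⟩
    have h1 : Tendsto (fun j => a (φ (σ n)) (ψ j)) atTop (nhds (g (σ n))) :=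
      hψlim (σ n)
    exact h1.comp hρ.tendsto_atTop
  have hIter2 : IterLim (fun m n => a (φ (σ n)) (ψ (ρ m))) L₂ := by
    refine ⟨fun m => f (ψ (ρ m)), fun m => ?_, hρlim⟩
    have h1 : Tendsto (fun k => a (φ k) (ψ (ρ m))) atTop (nhds (f (ψ (ρ m)))) :=
      hφlim (ψ (ρ m))
    exact h1.comp hσ.tendsto_atTop
  have := hzc x y hxinj hyinj L₁ L₂ hIter1 hIter2
  have hδL : δ ≤ L₁ := hL₁.1
  linarith [this.1]
end

section
/- Let S be a semigroup with an injective sequence (sₙ) admitting subsequences (xₖ), (yₗ) with {xₖ yₗ : k < l} ∩ {xₖ yₗ : k > l} = ∅, and let ω be a weight on S with ε ≤ ω and ω(sₙ) ≤ n₀ for all n. If Ω is 0-cluster, this yields a contradiction; hence no such configuration exists when Ω is 0-cluster. -/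
open Filter Function

theorem triangle_disjoint_not_zeroCluster {S : Type*} [Semigroup S]
    (s : ℕ → S) (hs : Injective s)
    (n m : ℕ → ℕ) (hn : StrictMono n) (hm : StrictMono m)
    (hdisj : {z : S | ∃ k l, k < l ∧ s (n k) * s (m l) = z} ∩
        {z : S | ∃ k l, l < k ∧ s (n k) * s (m l) = z} = ∅)
    (ω : S → ℝ) (hω : IsWeight ω) (ε : ℝ) (hε : 0 < ε) (hbdd : ∀ x, ε ≤ ω x)
    (n₀ : ℝ) (hn₀ : ∀ k, ω (s k) ≤ n₀) :
    ¬ ZeroCluster (fun a b : S => ω (a * b) / (ω a * ω b)) := by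
  intro hZC
  obtain ⟨hpos, hsub⟩ := hω
  have hn₀pos : 0 < n₀ := lt_of_lt_of_le hε ((hbdd (s 0)).trans (hn₀ 0))
  set c : ℝ := ε / (n₀ * n₀) with hc
  have hcpos : 0 < c := div_pos hε (mul_pos hn₀pos hn₀pos)
  set F : ℕ → ℕ → ℝ :=
    fun k l => ω (s (n k) * s (m l)) / (ω (s (n k)) * ω (s (m l))) with hF
  have hmem : ∀ k l, F k l ∈ Set.Icc c 1 := by
    intro k l
    have hd : 0 < ω (s (n k)) * ω (s (m l)) := mul_pos (hpos _) (hpos _)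
    constructor
    · exact div_le_div₀ (le_of_lt (hpos _)) (hbdd _) hd
        (mul_le_mul (hn₀ _) (hn₀ _) (le_of_lt (hpos _)) (le_of_lt hn₀pos))
    · rw [div_le_one hd]; exact hsub _ _
  -- compactness extraction
  obtain ⟨g1, ψ1, hψ1, hg1⟩ := CompactSpace.tendsto_subseq
    (fun l k => (⟨F k l, hmem k l⟩ : Set.Icc c 1))
  have hg1' : ∀ k, Tendsto (fun l => F k (ψ1 l)) atTop (nhds ((g1 k : ℝ))) := by
    intro k
    exact (continuous_subtype_val.tendsto _).comp (tendsto_pi_nhds.mp hg1 k)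
  obtain ⟨h1, φ1, hφ1, hh1⟩ := CompactSpace.tendsto_subseq
    (fun k l => (⟨F k (ψ1 l), hmem _ _⟩ : Set.Icc c 1))
  have hh1' : ∀ l, Tendsto (fun k => F (φ1 k) (ψ1 l)) atTop (nhds ((h1 l : ℝ))) := by
    intro l
    exact (continuous_subtype_val.tendsto _).comp (tendsto_pi_nhds.mp hh1 l)
  obtain ⟨L1, φ2, hφ2, hL1⟩ := CompactSpace.tendsto_subseq (g1 ∘ φ1)
  obtain ⟨L2, ψ2, hψ2, hL2⟩ := CompactSpace.tendsto_subseq h1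
  set x : ℕ → S := fun k => s (n (φ1 (φ2 k))) with hx
  set y : ℕ → S := fun l => s (m (ψ1 (ψ2 l))) with hy
  have hxinj : Injective x :=
    hs.comp (hn.injective.comp ((hφ1.comp hφ2).injective))
  have hyinj : Injective y :=
    hs.comp (hm.injective.comp ((hψ1.comp hψ2).injective))
  have hI1 : IterLim (fun k l =>
      ω (x k * y l) / (ω (x k) * ω (y l))) ((L1 : ℝ)) := by
    refine ⟨fun k => (g1 (φ1 (φ2 k)) : ℝ), fun k => ?_, ?_⟩
    · exact (hg1' (φ1 (φ2 k))).comp hψ2.tendsto_atTop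
    · exact (continuous_subtype_val.tendsto _).comp hL1
  have hI2 : IterLim (fun l k =>
      ω (x k * y l) / (ω (x k) * ω (y l))) ((L2 : ℝ)) := by
    refine ⟨fun l => (h1 (ψ2 l) : ℝ), fun l => ?_, ?_⟩
    · exact (hh1' (ψ2 l)).comp hφ2.tendsto_atTop
    · exact (continuous_subtype_val.tendsto _).comp hL2
  have := hZC x y hxinj hyinj (L1 : ℝ) (L2 : ℝ) hI1 hI2
  have hcL : c ≤ (L1 : ℝ) := L1.2.1
  linarith [this.1]
end

section
/- Let S be a left-zero semigroup (xy = x for all x,y ∈ S), and suppose ω is a weight on S bounded below by ε > 0 such that Ω(x,y) = ω(xy)/(ω(x)ω(y)) is 0-cluster. Then S is countable. -/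
open Filter Function

theorem leftzero_zeroCluster_countable {S : Type*} [Semigroup S]
    (hlz : ∀ x y : S, x * y = x)
    (ω : S → ℝ) (hω : IsWeight ω) (ε : ℝ) (hε : 0 < ε) (hbdd : ∀ x, ε ≤ ω x)
    (hcl : ZeroCluster (fun x y : S => ω (x * y) / (ω x * ω y))) :
    Countable S := by
  obtain ⟨hpos, -⟩ := hω
  -- Ω(x,y) = 1/ω(y)
  have hOm : ∀ x y : S, ω (x * y) / (ω x * ω y) = 1 / ω y := by
    intro x y
    rw [hlz]
    rw [div_eq_div_iff (mul_pos (hpos x) (hpos y)).ne' (hpos y).ne']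
    ring
  -- each sublevel set is finite
  have hfin : ∀ M : ℝ, {s : S | ω s ≤ M}.Finite := by
    intro M
    by_contra hinf
    replace hinf : {s : S | ω s ≤ M}.Infinite := hinf
    have hM : ε ≤ M := by
      obtain ⟨s, hs⟩ := hinf.nonempty
      exact (hbdd s).trans hs
    have hMpos : 0 < M := lt_of_lt_of_le hε hM
    set e := hinf.natEmbedding
    set y : ℕ → S := fun n => (e n : S) with hy
    have hyinj : Injective y := fun a b h => e.injective (Subtype.ext h)
    have hmem : ∀ n, 1 / ω (y n) ∈ Set.Icc (1 / M) (1 / ε) := by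
      intro n
      have h1 : ε ≤ ω (y n) := hbdd _
      have h2 : ω (y n) ≤ M := (e n).2
      constructor
      · exact one_div_le_one_div_of_le (hpos _) h2
      · exact one_div_le_one_div_of_le hε h1
    obtain ⟨a, ha, φ, hφ, hconv⟩ := tendsto_subseq_of_bounded
      (Metric.isBounded_Icc (1 / M) (1 / ε)) hmem
    rw [closure_Icc] at ha
    have hapos : 0 < a := lt_of_lt_of_le (by positivity) ha.1
    set z : ℕ → S := y ∘ φ with hz
    have hzinj : Injective z := hyinj.comp hφ.injective
    have hconv' : Tendsto (fun m => 1 / ω (z m)) atTop (nhds a) := hconv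
    have h1 : IterLim (fun n m => ω (z n * z m) / (ω (z n) * ω (z m))) a := by
      refine ⟨fun _ => a, fun n => ?_, tendsto_const_nhds⟩
      simpa only [hOm] using hconv'
    have h2 : IterLim (fun m n => ω (z n * z m) / (ω (z n) * ω (z m))) a := by
      refine ⟨fun m => 1 / ω (z m), fun m => ?_, hconv'⟩
      simpa only [hOm] using (tendsto_const_nhds : Tendsto (fun _ : ℕ => 1 / ω (z m)) atTop _)
    have := (hcl z z hzinj hzinj a a h1 h2).1
    exact absurd this (ne_of_gt hapos)
  have hcov : (Set.univ : Set S) ⊆ ⋃ n : ℕ, {s : S | ω s ≤ (n : ℝ)} := by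
    intro s _
    obtain ⟨n, hn⟩ := exists_nat_ge (ω s)
    exact Set.mem_iUnion.mpr ⟨n, hn⟩
  have : (Set.univ : Set S).Countable :=
    Set.Countable.mono hcov (Set.countable_iUnion fun n => (hfin n).countable)
  exact Set.countable_univ_iff.mp this
end

section
/- Let S be a countable semigroup. Then there exists a weight ω on S with ω ≥ 1 such that Ω(s,t) = ω(st)/(ω(s)ω(t)) is 0-cluster: for every pair of injective sequences (sₙ), (tₘ) in S, both iterated limits limₙ limₘ Ω(sₙ,tₘ) and limₘ limₙ Ω(sₙ,tₘ), whenever they exist, equal 0. -/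
open Filter Function

section Aux

variable {S : Type*} [Semigroup S]

/-- Product of the nonempty word `k :: l` under the generator map `f`. -/
def wprod (f : ℕ → S) (k : ℕ) (l : List ℕ) : S :=
  l.foldl (fun a i => a * f i) (f k)

lemma foldl_mul (f : ℕ → S) (l : List ℕ) (x y : S) :
    l.foldl (fun a i => a * f i) (x * y) = x * l.foldl (fun a i => a * f i) y := by
  induction l generalizing y with
  | nil => rfl
  | cons i l ih => simp only [List.foldl_cons, mul_assoc, ih]

/-- Weight of the word `k :: l`. -/
def wt (k : ℕ) (l : List ℕ) : ℕ := 2 + k + (l.map (· + 1)).sum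

def Wset (f : ℕ → S) (s : S) : Set ℕ :=
  {n | ∃ k l, wprod f k l = s ∧ n = wt k l}

lemma Wset_nonempty (f : ℕ → S) (hf : Surjective f) (s : S) : (Wset f s).Nonempty := by
  obtain ⟨k, hk⟩ := hf s
  exact ⟨wt k [], k, [], by simpa [wprod] using hk, rfl⟩

lemma two_le_of_mem_Wset {f : ℕ → S} {s : S} {n : ℕ} (h : n ∈ Wset f s) : 2 ≤ n := by
  obtain ⟨k, l, -, rfl⟩ := h
  simp [wt]; omega

lemma wprod_append (f : ℕ → S) (k k' : ℕ) (l l' : List ℕ) :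
    wprod f k (l ++ k' :: l') = wprod f k l * wprod f k' l' := by
  simp only [wprod, List.foldl_append, List.foldl_cons]
  exact foldl_mul f l' (wprod f k l) (f k')

lemma sInf_Wset_mul (f : ℕ → S) (hf : Surjective f) (s t : S) :
    sInf (Wset f (s * t)) + 1 ≤ sInf (Wset f s) + sInf (Wset f t) := by
  obtain ⟨k, l, hkl, hw⟩ := Nat.sInf_mem (Wset_nonempty f hf s)
  obtain ⟨k', l', hkl', hw'⟩ := Nat.sInf_mem (Wset_nonempty f hf t)
  have hmem : wt k (l ++ k' :: l') ∈ Wset f (s * t) :=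
    ⟨k, l ++ k' :: l', by rw [wprod_append, hkl, hkl'], rfl⟩
  have h1 : sInf (Wset f (s * t)) ≤ wt k (l ++ k' :: l') := Nat.sInf_le hmem
  have h2 : wt k (l ++ k' :: l') + 1 = wt k l + wt k' l' := by
    simp [wt, List.map_append, List.sum_append]; omega
  omega

lemma finite_small (f : ℕ → S) (C : ℕ) :
    {s : S | (Wset f s).Nonempty ∧ sInf (Wset f s) ≤ C}.Finite := by
  have hwords : {p : ℕ × List ℕ | wt p.1 p.2 ≤ C}.Finite := by
    have h1 : {l : List (Fin (C + 1)) | l.length ≤ C}.Finite := List.finite_length_le _ _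
    have : {p : ℕ × List ℕ | wt p.1 p.2 ≤ C} ⊆
        (fun l : List (Fin (C + 1)) => ((l.headI : ℕ), l.tail.map Fin.val)) ''
          {l : List (Fin (C + 1)) | l.length ≤ C} := by
      rintro ⟨k, l⟩ hp
      simp only [Set.mem_setOf_eq, wt] at hp
      have hk : k < C + 1 := by omega
      have hlen : l.length ≤ (l.map (· + 1)).sum := by
        calc l.length = (l.map (· + 1)).length := by simp
        _ ≤ (l.map (· + 1)).sum := List.length_le_sum_of_one_le _ (by
            intro i hi; simp only [List.mem_map] at hi; omega)
      have hmem : ∀ i ∈ l, i < C + 1 := by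
        intro i hi
        have : i + 1 ≤ (l.map (· + 1)).sum := List.le_sum_of_mem (by
          exact List.mem_map.mpr ⟨i, hi, rfl⟩)
        omega
      refine ⟨⟨k, hk⟩ :: l.attach.map (fun i => (⟨i.1, hmem i.1 i.2⟩ : Fin (C + 1))), ?_, ?_⟩
      · simp only [Set.mem_setOf_eq, List.length_cons, List.length_map, List.length_attach]
        omega
      · simp [List.map_map, Function.comp]
    exact (h1.image _).subset this
  have : {s : S | (Wset f s).Nonempty ∧ sInf (Wset f s) ≤ C} ⊆
      (fun p : ℕ × List ℕ => wprod f p.1 p.2) '' {p : ℕ × List ℕ | wt p.1 p.2 ≤ C} := by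
    rintro s ⟨hne, hle⟩
    obtain ⟨k, l, hkl, hw⟩ := Nat.sInf_mem hne
    exact ⟨(k, l), by simpa [← hw] using hle, hkl⟩
  exact (hwords.image _).subset this

end Aux

theorem countable_semigroup_admits_zeroCluster_weight
    {S : Type*} [Semigroup S] [Countable S] :
    ∃ ω : S → ℝ, IsWeight ω ∧ (∀ s, 1 ≤ ω s) ∧
      ZeroCluster (fun s t : S => ω (s * t) / (ω s * ω t)) := by
  rcases isEmpty_or_nonempty S with hS | hS
  · exact ⟨fun _ => 1, ⟨fun s => one_pos, fun s t => by norm_num⟩, fun s => le_refl 1,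
      fun x y _ _ _ _ _ _ => (hS.false (x 0)).elim⟩
  obtain ⟨f, hf⟩ := exists_surjective_nat S
  set N : S → ℕ := fun s => sInf (Wset f s) with hN
  set ω : S → ℝ := fun s => (N s : ℝ) with hω
  have hN2 : ∀ s, 2 ≤ N s := fun s =>
    two_le_of_mem_Wset (Nat.sInf_mem (Wset_nonempty f hf s))
  have hω1 : ∀ s, (1 : ℝ) ≤ ω s := fun s => by
    have := hN2 s; simp only [hω]; exact_mod_cast by omega
  have hωpos : ∀ s, (0 : ℝ) < ω s := fun s => lt_of_lt_of_le one_pos (hω1 s)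
  have hsub : ∀ s t : S, ω (s * t) ≤ ω s + ω t - 1 := by
    intro s t
    have h := sInf_Wset_mul f hf s t
    have h' : (N (s * t) : ℝ) + 1 ≤ (N s : ℝ) + (N t : ℝ) := by exact_mod_cast h
    simp only [hω]
    linarith
  have hmul : ∀ s t : S, ω (s * t) ≤ ω s * ω t := by
    intro s t
    have h := hsub s t
    nlinarith [hω1 s, hω1 t]
  -- along injective sequences, ω tends to infinity
  have hinf : ∀ x : ℕ → S, Injective x → Tendsto (fun n => ω (x n)) atTop atTop := by
    intro x hx
    rw [tendsto_atTop_atTop]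
    intro C
    have hfin : {s : S | (Wset f s).Nonempty ∧ N s ≤ ⌈C⌉₊}.Finite := finite_small f ⌈C⌉₊
    have hpre : {n : ℕ | x n ∈ {s : S | (Wset f s).Nonempty ∧ N s ≤ ⌈C⌉₊}}.Finite :=
      hfin.preimage (hx.injOn)
    obtain ⟨M, hM⟩ := hpre.bddAbove
    refine ⟨M + 1, fun n hn => ?_⟩
    have hnot : ¬ ((Wset f (x n)).Nonempty ∧ N (x n) ≤ ⌈C⌉₊) := by
      intro hmem
      have := hM hmem
      omega
    have : ¬ N (x n) ≤ ⌈C⌉₊ := fun h => hnot ⟨Wset_nonempty f hf (x n), h⟩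
    have h1 : (⌈C⌉₊ : ℝ) < N (x n) := by exact_mod_cast Nat.lt_of_not_le this
    calc C ≤ (⌈C⌉₊ : ℝ) := Nat.le_ceil C
    _ ≤ ω (x n) := le_of_lt h1
  -- the quotient is bounded by 1/ω s + 1/ω t
  have hbound : ∀ s t : S, ω (s * t) / (ω s * ω t) ≤ 1 / ω s + 1 / ω t := by
    intro s t
    rw [div_le_iff₀ (mul_pos (hωpos s) (hωpos t))]
    have := hsub s t
    have h1 := hω1 s; have h2 := hω1 t
    have hs := hωpos s; have ht := hωpos t
    field_simp
    nlinarith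
  have hnonneg : ∀ s t : S, 0 ≤ ω (s * t) / (ω s * ω t) := fun s t => by positivity
  refine ⟨ω, ⟨hωpos, hmul⟩, hω1, ?_⟩
  -- main ZeroCluster argument
  have key : ∀ (u v : ℕ → S), Injective u → Injective v → ∀ L : ℝ,
      IterLim (fun n m => ω (u n * v m) / (ω (u n) * ω (v m))) L → L = 0 := by
    intro u v hu hv L ⟨g, hg1, hg2⟩
    have hvinf := hinf v hv
    have hginv : Tendsto (fun n => 1 / ω (u n)) atTop (nhds 0) :=
      (hinf u hu).inv_tendsto_atTop.congr (fun n => (one_div _).symm)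
    have hglb : ∀ n, 0 ≤ g n := fun n =>
      ge_of_tendsto' (hg1 n) (fun m => hnonneg _ _)
    have hgub : ∀ n, g n ≤ 1 / ω (u n) := by
      intro n
      have hlim : Tendsto (fun m => 1 / ω (u n) + 1 / ω (v m)) atTop (nhds (1 / ω (u n) + 0)) :=
        tendsto_const_nhds.add (hvinf.inv_tendsto_atTop.congr (fun m => (one_div _).symm))
      rw [add_zero] at hlim
      exact le_of_tendsto_of_tendsto' (hg1 n) hlim (fun m => hbound _ _)
    have hg0 : Tendsto g atTop (nhds 0) := by
      refine squeeze_zero hglb hgub hginv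
    exact tendsto_nhds_unique hg2 hg0
  have key2 : ∀ (u v : ℕ → S), Injective u → Injective v → ∀ L : ℝ,
      IterLim (fun m n => ω (u n * v m) / (ω (u n) * ω (v m))) L → L = 0 := by
    intro u v hu hv L ⟨g, hg1, hg2⟩
    have huinf := hinf u hu
    have hgv : Tendsto (fun m => 1 / ω (v m)) atTop (nhds 0) :=
      (hinf v hv).inv_tendsto_atTop.congr (fun m => (one_div _).symm)
    have hglb : ∀ m, 0 ≤ g m := fun m =>
      ge_of_tendsto' (hg1 m) (fun n => hnonneg _ _)
    have hgub : ∀ m, g m ≤ 1 / ω (v m) := by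
      intro m
      have hlim : Tendsto (fun n => 1 / ω (u n) + 1 / ω (v m)) atTop (nhds (0 + 1 / ω (v m))) :=
        (huinf.inv_tendsto_atTop.congr (fun n => (one_div _).symm)).add tendsto_const_nhds
      rw [zero_add] at hlim
      exact le_of_tendsto_of_tendsto' (hg1 m) hlim (fun n => hbound _ _)
    exact tendsto_nhds_unique hg2 (squeeze_zero hglb hgub hgv)
  intro x y hx hy L₁ L₂ h1 h2
  exact ⟨key x y hx hy L₁ h1, key2 x y hx hy L₂ h2⟩
end
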